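/- Let h be a prime dividing Π_i s_i, and let φ: G → ℤ_h be a normalized h-ary (s_1,…,s_m)-array (φ(0) = 0). Then φ is a GPhA(s) of type z ≠ 0 if and only if the cocycle μ_z·∂φ ∈ Z²(G, ⟨ζ_h⟩) is orthogonal, i.e., M_{μ_z·∂φ} ∈ BH(Π_i s_i, h). -/

import Mathlib

open scoped BigOperators Pointwise

noncomputable section

/-- `zeta k` is the complex `k`-th root of unity `exp(2π√-1/k)`. -/
def zeta (k : ℕ) : ℂ := Complex.exp (2 * Real.pi * Complex.I / k)

/-- Periodic autocorrelation of a map `f : A → ℤ_h` at shift `w`. -/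
def AC {A : Type*} [AddCommGroup A] [Fintype A] (h : ℕ) (f : A → ZMod h) (w : A) : ℂ :=
  ∑ g : A, zeta h ^ (f g - f (g + w)).val

/-- The expansion `φ' : E → ℤ_h` of type `z` of an `h`-ary array `φ`:
`φ'(g) = φ(g mod s) + Σ_i ⌊g_i / s_i⌋ (mod h)`. -/
def expand (m h : ℕ) (s z : Fin m → ℕ) (φ : (∀ i, ZMod (s i)) → ZMod h)
    (g : ∀ i, ZMod ((z i * (h - 1) + 1) * s i)) : ZMod h :=
  φ (fun i => ((g i).val : ZMod (s i))) + ((∑ i, (g i).val / s i : ℕ) : ZMod h)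

/-- The set `L ⊆ E`. -/
def LSet (m h : ℕ) (s z : Fin m → ℕ) :
    Set (∀ i, ZMod ((z i * (h - 1) + 1) * s i)) :=
  {g | ∀ i, s i ∣ (g i).val ∧ (z i = 0 → (g i).val = 0)}

private theorem cast_val_mod {n t : ℕ} (hd : t ∣ n) (X : ℕ) :
    ((X % n : ℕ) : ZMod t) = (X : ZMod t) := by
  conv_rhs => rw [← Nat.div_add_mod X n]
  push_cast
  rw [(ZMod.natCast_eq_zero_iff n t).2 hd]
  ring

/-- `L` as a subgroup of `E`. -/
def Lsub (m h : ℕ) (s z : Fin m → ℕ)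
    [∀ i, NeZero ((z i * (h - 1) + 1) * s i)] :
    AddSubgroup (∀ i, ZMod ((z i * (h - 1) + 1) * s i)) where
  carrier := LSet m h s z
  zero_mem' := by
    intro i
    simp [ZMod.val_zero]
  add_mem' := by
    rintro a b ha hb i
    obtain ⟨ha1, ha2⟩ := ha i
    obtain ⟨hb1, hb2⟩ := hb i
    have hval : ((a + b) i).val = ((a i).val + (b i).val) % ((z i * (h - 1) + 1) * s i) :=
      ZMod.val_add _ _
    constructor
    · rw [hval]
      exact (Nat.dvd_mod_iff (dvd_mul_left _ _)).2 (Nat.dvd_add ha1 hb1)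
    · intro hzi
      rw [hval, ha2 hzi, hb2 hzi]
      simp
  neg_mem' := by
    rintro a ha i
    obtain ⟨ha1, ha2⟩ := ha i
    have hval : ((-a) i).val
        = if a i = 0 then 0 else (z i * (h - 1) + 1) * s i - (a i).val :=
      ZMod.neg_val _
    constructor
    · rw [hval]
      split
      · exact dvd_zero _
      · exact Nat.dvd_sub (dvd_mul_left _ _) ha1
    · intro hzi
      rw [hval]
      have : a i = 0 := (ZMod.val_eq_zero _).1 (ha2 hzi)
      simp [this]

/-- `K = {g ∈ L : Σ_i g_i/s_i ≡ 0 (mod h)}` as a subgroup of `E`. -/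
def Ksub (m h : ℕ) (s z : Fin m → ℕ)
    [∀ i, NeZero ((z i * (h - 1) + 1) * s i)]
    (hh : 2 ≤ h) (hs : ∀ i, 1 < s i) (hz : ∀ i, z i ≤ 1) :
    AddSubgroup (∀ i, ZMod ((z i * (h - 1) + 1) * s i)) where
  carrier := {g | g ∈ LSet m h s z ∧ (h : ℕ) ∣ ∑ i, (g i).val / s i}
  zero_mem' := by
    refine ⟨(Lsub m h s z).zero_mem', ?_⟩
    simp [ZMod.val_zero]
  add_mem' := by
    rintro a b ⟨haL, haS⟩ ⟨hbL, hbS⟩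
    refine ⟨(Lsub m h s z).add_mem' haL hbL, ?_⟩
    rw [← ZMod.natCast_eq_zero_iff] at haS hbS ⊢
    rw [Nat.cast_sum] at haS hbS ⊢
    have key : ∀ i, ((((a + b) i).val / s i : ℕ) : ZMod h)
        = (((a i).val / s i : ℕ) : ZMod h) + (((b i).val / s i : ℕ) : ZMod h) := by
      intro i
      have hzi : z i = 0 ∨ z i = 1 := by have := hz i; omega
      have hval : ((a + b) i).val = ((a i).val + (b i).val) % ((z i * (h - 1) + 1) * s i) :=
        ZMod.val_add _ _
      rcases hzi with h0 | h1
      · have ha0 := (haL i).2 h0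
        have hb0 := (hbL i).2 h0
        rw [hval, ha0, hb0]
        simp
      · have hc : z i * (h - 1) + 1 = h := by rw [h1]; omega
        obtain ⟨α, hα⟩ := (haL i).1
        obtain ⟨β, hβ⟩ := (hbL i).1
        have hspos : 0 < s i := by have := hs i; omega
        rw [hval, Nat.mod_mul_left_div_self, hα, hβ, ← Nat.mul_add,
          Nat.mul_div_cancel_left _ hspos, Nat.mul_div_cancel_left _ hspos,
          Nat.mul_div_cancel_left _ hspos, hc, ZMod.natCast_mod, Nat.cast_add]
    rw [Finset.sum_congr rfl fun i _ => key i, Finset.sum_add_distrib, haS, hbS, add_zero]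
  neg_mem' := by
    rintro a ⟨haL, haS⟩
    refine ⟨(Lsub m h s z).neg_mem' haL, ?_⟩
    rw [← ZMod.natCast_eq_zero_iff] at haS ⊢
    rw [Nat.cast_sum] at haS ⊢
    have key : ∀ i, ((((-a) i).val / s i : ℕ) : ZMod h)
        = -(((a i).val / s i : ℕ) : ZMod h) := by
      intro i
      have hzi : z i = 0 ∨ z i = 1 := by have := hz i; omega
      have hval : ((-a) i).val
          = if a i = 0 then 0 else (z i * (h - 1) + 1) * s i - (a i).val :=
        ZMod.neg_val _
      by_cases h0 : a i = 0
      · rw [hval, if_pos h0, h0]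
        simp [ZMod.val_zero]
      · rcases hzi with hz0 | hz1
        · exact absurd ((ZMod.val_eq_zero _).1 ((haL i).2 hz0)) h0
        · have hc : z i * (h - 1) + 1 = h := by rw [hz1]; omega
          obtain ⟨α, hα⟩ := (haL i).1
          have hspos : 0 < s i := by have := hs i; omega
          have hlt : (a i).val < (z i * (h - 1) + 1) * s i := ZMod.val_lt _
          have hαle : α ≤ z i * (h - 1) + 1 := by
            rw [hα, mul_comm (z i * (h - 1) + 1) (s i)] at hlt
            have := Nat.lt_of_mul_lt_mul_left hlt
            omega
          have hsub : (z i * (h - 1) + 1) * s i - (a i).val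
              = s i * ((z i * (h - 1) + 1) - α) := by
            rw [hα, mul_comm (z i * (h - 1) + 1) (s i)]
            exact (Nat.mul_sub _ _ _).symm
          rw [hval, if_neg h0, hsub, Nat.mul_div_cancel_left _ hspos, hα,
            Nat.mul_div_cancel_left _ hspos, Nat.cast_sub hαle, hc]
          simp
    rw [Finset.sum_congr rfl fun i _ => key i, Finset.sum_neg_distrib, haS, neg_zero]

/-- The reduction-mod-`s` homomorphism `E →+ G`. -/
def resHom (m h : ℕ) (s z : Fin m → ℕ)
    [∀ i, NeZero ((z i * (h - 1) + 1) * s i)] :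
    (∀ i, ZMod ((z i * (h - 1) + 1) * s i)) →+ (∀ i, ZMod (s i)) where
  toFun g i := ((g i).val : ZMod (s i))
  map_zero' := by
    funext i
    simp [ZMod.val_zero]
  map_add' a b := by
    funext i
    show (((a i + b i)).val : ZMod (s i)) = ((a i).val : ZMod (s i)) + ((b i).val : ZMod (s i))
    rw [ZMod.val_add, cast_val_mod (dvd_mul_left _ _), Nat.cast_add]

/-- The homomorphism `β : E/K → G` induced by reduction mod `s`. -/
def betaHom (m h : ℕ) (s z : Fin m → ℕ)
    [∀ i, NeZero ((z i * (h - 1) + 1) * s i)]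
    (hh : 2 ≤ h) (hs : ∀ i, 1 < s i) (hz : ∀ i, z i ≤ 1) :
    (∀ i, ZMod ((z i * (h - 1) + 1) * s i)) ⧸ Ksub m h s z hh hs hz →+ (∀ i, ZMod (s i)) :=
  QuotientAddGroup.lift (Ksub m h s z hh hs hz) (resHom m h s z) (by
    intro g hg
    funext i
    exact (ZMod.natCast_eq_zero_iff _ _).2 ((hg.1 i).1))

/-- The transversal map `τ : G → E/K`, `τ(x) = x + K`
(embedding `x` with representatives `0 ≤ x_i < s_i`). -/
def tau (m h : ℕ) (s z : Fin m → ℕ)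
    [∀ i, NeZero ((z i * (h - 1) + 1) * s i)]
    (hh : 2 ≤ h) (hs : ∀ i, 1 < s i) (hz : ∀ i, z i ≤ 1)
    (x : ∀ i, ZMod (s i)) :
    (∀ i, ZMod ((z i * (h - 1) + 1) * s i)) ⧸ Ksub m h s z hh hs hz :=
  QuotientAddGroup.mk (fun i => (((x i).val : ℕ) : ZMod ((z i * (h - 1) + 1) * s i)))

/-- The injection `ι : ⟨ζ_h⟩ ≅ ℤ_h → E/K`, sending `ζ_h^j` to
`j • ((0,…,0,s_{i₀},0,…,0) + K)` for the fixed index `i₀` with `z i₀ = 1`. -/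
def iota (m h : ℕ) (s z : Fin m → ℕ)
    [∀ i, NeZero ((z i * (h - 1) + 1) * s i)]
    (hh : 2 ≤ h) (hs : ∀ i, 1 < s i) (hz : ∀ i, z i ≤ 1)
    (i₀ : Fin m) (j : ZMod h) :
    (∀ i, ZMod ((z i * (h - 1) + 1) * s i)) ⧸ Ksub m h s z hh hs hz :=
  j.val • (QuotientAddGroup.mk
    (Pi.single i₀ ((s i₀ : ℕ) : ZMod ((z i₀ * (h - 1) + 1) * s i₀))))

/-- `R` is a `(v,n,k,λ)`-relative difference set in the additive group `E`
relative to the (forbidden) subgroup `N`. -/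
def IsAddRDS {E : Type*} [AddGroup E] (N : AddSubgroup E) (R : Set E)
    (v n k l : ℕ) : Prop :=
  N.index = v ∧ Nat.card N = n ∧ Nat.card R = k ∧
    (∀ r ∈ R, ∀ r' ∈ R, r - r' ∈ N → r = r') ∧
    ∀ x : E, x ∉ N → Nat.card {p : R × R // (p.1 : E) - (p.2 : E) = x} = l

/-- A Butson Hadamard matrix in `BH(n,k)`. -/
def IsBH {ι : Type*} [Fintype ι] [DecidableEq ι] (n k : ℕ) (M : Matrix ι ι ℂ) : Prop :=
  Fintype.card ι = n ∧ (∀ a b, ∃ j : ℕ, M a b = zeta k ^ j) ∧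
    M * M.conjTranspose = (n : ℂ) • (1 : Matrix ι ι ℂ)

end

/-- The cocycle `μ_z` in exponent form:
`μ_z(x,y) = ζ_h^{Σ_{i : z i = 1} ⌊(x_i+y_i)/s_i⌋}`. -/
def muexp (m h : ℕ) (s z : Fin m → ℕ) (x y : ∀ i, ZMod (s i)) : ZMod h :=
  ((∑ i, if z i = 1 then ((x i).val + (y i).val) / s i else 0 : ℕ) : ZMod h)

/-- The cocycle `ψ = μ_z·∂φ` in exponent form, i.e.
`ψ(x,y) = μ_z(x,y)·ζ_h^{φ(x+y)-φ(x)-φ(y)}`. -/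
def psiexp (m h : ℕ) (s z : Fin m → ℕ) (φ : (∀ i, ZMod (s i)) → ZMod h)
    (x y : ∀ i, ZMod (s i)) : ZMod h :=
  muexp m h s z x y + (φ (x + y) - φ x - φ y)

section Helpers

/-- `ze h x = ζ_h^x` for `x : ℤ_h`. -/
private noncomputable def ze (h : ℕ) (x : ZMod h) : ℂ := zeta h ^ x.val

private lemma zeta_pow_self (h : ℕ) (hh : h ≠ 0) : zeta h ^ h = 1 := by
  have hc : (h : ℂ) ≠ 0 := Nat.cast_ne_zero.2 hh
  rw [zeta, ← Complex.exp_nat_mul]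
  have harg : (h : ℂ) * (2 * Real.pi * Complex.I / h) = 2 * Real.pi * Complex.I := by
    field_simp
  rw [harg]
  exact Complex.exp_two_pi_mul_I

private lemma zeta_pow_mod (h : ℕ) (hh : h ≠ 0) (a : ℕ) :
    zeta h ^ (a % h) = zeta h ^ a := by
  conv_rhs => rw [← Nat.div_add_mod a h]
  rw [pow_add, pow_mul, zeta_pow_self h hh, one_pow, one_mul]

private lemma ze_natCast (h : ℕ) (hh : h ≠ 0) (a : ℕ) :
    ze h (a : ZMod h) = zeta h ^ a := by
  haveI : NeZero h := ⟨hh⟩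
  rw [ze, ZMod.val_natCast, zeta_pow_mod h hh]

private lemma ze_add (h : ℕ) (hh : h ≠ 0) (x y : ZMod h) :
    ze h (x + y) = ze h x * ze h y := by
  haveI : NeZero h := ⟨hh⟩
  rw [ze, ze, ze, ZMod.val_add, zeta_pow_mod h hh, pow_add]

private lemma ze_zero (h : ℕ) (hh : h ≠ 0) : ze h 0 = 1 := by
  haveI : NeZero h := ⟨hh⟩
  rw [ze, ZMod.val_zero, pow_zero]

private lemma zeta_abs (h : ℕ) : ‖zeta h‖ = 1 := by
  rw [show zeta h = Complex.exp (((2 * Real.pi / h : ℝ) : ℂ) * Complex.I) by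
    rw [zeta]; push_cast; ring_nf]
  exact Complex.norm_exp_ofReal_mul_I _

private lemma ze_ne_zero (h : ℕ) (x : ZMod h) : ze h x ≠ 0 :=
  pow_ne_zero _ (Complex.exp_ne_zero _)

private lemma conj_ze (h : ℕ) (hh : h ≠ 0) (x : ZMod h) :
    (starRingEnd ℂ) (ze h x) = ze h (-x) := by
  have habs : ‖ze h x‖ = 1 := by
    rw [ze, norm_pow, zeta_abs, one_pow]
  have h1 : ze h x * ze h (-x) = 1 := by
    rw [← ze_add h hh, add_neg_cancel, ze_zero h hh]
  have h2 : ze h (-x) * ze h x = 1 := by rw [mul_comm]; exact h1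
  rw [← Complex.inv_eq_conj habs]
  exact (eq_inv_of_mul_eq_one_left h2).symm

private lemma nat_div_add (s u b : ℕ) (hs : 0 < s) :
    u / s + (u % s + b) / s = (u + b) / s := by
  conv_rhs => rw [← Nat.div_add_mod u s, add_assoc, Nat.mul_add_div hs]

private lemma div_mod_cast (h sv a b : ℕ) (hs : 0 < sv) :
    ((((a + b) % (h * sv)) / sv : ℕ) : ZMod h)
      = ((a / sv : ℕ) : ZMod h) + ((b / sv : ℕ) : ZMod h)
        + (((a % sv + b % sv) / sv : ℕ) : ZMod h) := by
  have k1 : (a + b) / sv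
      = h * ((a + b) / (h * sv)) + ((a + b) % (h * sv)) / sv := by
    conv_lhs => rw [← Nat.div_add_mod (a + b) (h * sv)]
    rw [show h * sv * ((a + b) / (h * sv)) = sv * (h * ((a + b) / (h * sv))) by ring,
      Nat.mul_add_div hs]
  have k2 : (a + b) / sv = a / sv + b / sv + (a % sv + b % sv) / sv := by
    conv_lhs => rw [← Nat.div_add_mod a sv, ← Nat.div_add_mod b sv]
    rw [show sv * (a / sv) + a % sv + (sv * (b / sv) + b % sv)
        = sv * (a / sv + b / sv) + (a % sv + b % sv) by ring,
      Nat.mul_add_div hs]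
  have k3 := k1.symm.trans k2
  have c := congrArg (Nat.cast : ℕ → ZMod h) k3
  push_cast at c
  rw [ZMod.natCast_self] at c
  linear_combination c

private lemma muexp_comm (m h : ℕ) (s z : Fin m → ℕ) (x y : ∀ i, ZMod (s i)) :
    muexp m h s z x y = muexp m h s z y x := by
  unfold muexp
  congr 1
  refine Finset.sum_congr rfl fun i _ => ?_
  rw [Nat.add_comm ((x i).val) ((y i).val)]

private lemma muexp_zero_left (m h : ℕ) (s z : Fin m → ℕ) [∀ i, NeZero (s i)]
    (y : ∀ i, ZMod (s i)) : muexp m h s z 0 y = 0 := by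
  unfold muexp
  have hdiv : ∀ i, (y i).val / s i = 0 := fun i => Nat.div_eq_of_lt (ZMod.val_lt _)
  simp [ZMod.val_zero, hdiv]

private lemma muexp_cocycle (m h : ℕ) (s z : Fin m → ℕ) [∀ i, NeZero (s i)]
    (a b c : ∀ i, ZMod (s i)) :
    muexp m h s z a b + muexp m h s z (a + b) c
      = muexp m h s z a (b + c) + muexp m h s z b c := by
  unfold muexp
  rw [← Nat.cast_add, ← Nat.cast_add, ← Finset.sum_add_distrib, ← Finset.sum_add_distrib]
  refine congrArg Nat.cast (Finset.sum_congr rfl fun i _ => ?_)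
  by_cases hzi : z i = 1
  · simp only [hzi, if_true, Pi.add_apply]
    rw [ZMod.val_add, ZMod.val_add]
    have hpos : 0 < s i := Nat.pos_of_ne_zero (NeZero.ne _)
    set A := (a i).val with hA
    set B := (b i).val with hB
    set C := (c i).val with hC
    have h1 := nat_div_add (s i) (A + B) C hpos
    have h2 := nat_div_add (s i) (B + C) A hpos
    rw [h1, show A + B + C = B + C + A from by omega, ← h2,
      add_comm ((B + C) % s i) A]
    exact Nat.add_comm _ _
  · simp [hzi]

private lemma psiexp_cocycle (m h : ℕ) (s z : Fin m → ℕ) [∀ i, NeZero (s i)]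
    (φ : (∀ i, ZMod (s i)) → ZMod h) (a b c : ∀ i, ZMod (s i)) :
    psiexp m h s z φ a b + psiexp m h s z φ (a + b) c
      = psiexp m h s z φ a (b + c) + psiexp m h s z φ b c := by
  unfold psiexp
  have hmu := muexp_cocycle m h s z a b c
  rw [← add_assoc a b c]
  linear_combination hmu

private lemma psiexp_zero_left (m h : ℕ) (s z : Fin m → ℕ) [∀ i, NeZero (s i)]
    (φ : (∀ i, ZMod (s i)) → ZMod h) (hφ0 : φ 0 = 0) (b : ∀ i, ZMod (s i)) :
    psiexp m h s z φ 0 b = 0 := by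
  unfold psiexp
  rw [muexp_zero_left, zero_add, hφ0]
  ring

private lemma psiexp_zero_right (m h : ℕ) (s z : Fin m → ℕ) [∀ i, NeZero (s i)]
    (φ : (∀ i, ZMod (s i)) → ZMod h) (hφ0 : φ 0 = 0) (b : ∀ i, ZMod (s i)) :
    psiexp m h s z φ b 0 = 0 := by
  unfold psiexp
  rw [muexp_comm, muexp_zero_left, add_zero, hφ0]
  ring

private lemma sum_comp_surj {E G : Type*} [AddCommGroup E] [AddCommGroup G]
    [Fintype E] [Fintype G] [DecidableEq G]
    (r : E →+ G) (hr : Function.Surjective r) (F : G → ℂ) :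
    ∑ g : E, F (r g) = (Fintype.card r.ker : ℂ) * ∑ b : G, F b := by
  classical
  rw [← Fintype.sum_fiberwise (fun g => r g) (fun g => F (r g)), Finset.mul_sum]
  refine Finset.sum_congr rfl fun b _ => ?_
  have hcard : Fintype.card {g : E // r g = b} = Fintype.card r.ker := by
    obtain ⟨e, he⟩ := hr b
    apply Fintype.card_congr
    refine ⟨fun g => ⟨g.1 - e, ?_⟩, fun k => ⟨e + k.1, ?_⟩, fun g => ?_, fun k => ?_⟩
    · simp [AddMonoidHom.mem_ker, map_sub, g.2, he]
    · have hk : r k.1 = 0 := k.2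
      simp [map_add, he, hk]
    · ext1; simp
    · ext1; simp
  calc ∑ g : {g : E // r g = b}, F (r (g : E))
      = ∑ _g : {g : E // r g = b}, F b :=
        Finset.sum_congr rfl fun g _ => by rw [g.2]
    _ = (Fintype.card {g : E // r g = b} : ℂ) * F b := by
        rw [Finset.sum_const, Finset.card_univ, nsmul_eq_mul]
    _ = (Fintype.card r.ker : ℂ) * F b := by rw [hcard]

private lemma expand_add (m h : ℕ) (s z : Fin m → ℕ)
    [∀ i, NeZero ((z i * (h - 1) + 1) * s i)] [∀ i, NeZero (s i)]
    (hh : 2 ≤ h) (hz : ∀ i, z i ≤ 1)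
    (φ : (∀ i, ZMod (s i)) → ZMod h)
    (g w : ∀ i, ZMod ((z i * (h - 1) + 1) * s i)) :
    expand m h s z φ (g + w)
      = φ (resHom m h s z g + resHom m h s z w)
        + ((∑ i, (g i).val / s i : ℕ) : ZMod h)
        + ((∑ i, (w i).val / s i : ℕ) : ZMod h)
        + muexp m h s z (resHom m h s z g) (resHom m h s z w) := by
  haveI : NeZero h := ⟨by omega⟩
  have hφarg : (fun i => ((((g + w) i)).val : ZMod (s i)))
      = resHom m h s z g + resHom m h s z w := by
    rw [← map_add]; rfl
  have hsum : ((∑ i, ((g + w) i).val / s i : ℕ) : ZMod h)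
      = ((∑ i, (g i).val / s i : ℕ) : ZMod h) + ((∑ i, (w i).val / s i : ℕ) : ZMod h)
        + muexp m h s z (resHom m h s z g) (resHom m h s z w) := by
    unfold muexp
    rw [Nat.cast_sum, Nat.cast_sum, Nat.cast_sum, Nat.cast_sum,
      ← Finset.sum_add_distrib, ← Finset.sum_add_distrib]
    refine Finset.sum_congr rfl fun i _ => ?_
    have hres : ∀ v : ∀ i, ZMod ((z i * (h - 1) + 1) * s i),
        ((resHom m h s z v) i) = (((v i).val : ℕ) : ZMod (s i)) := fun v => rfl
    rw [hres, hres, ZMod.val_natCast, ZMod.val_natCast]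
    have hpos : 0 < s i := Nat.pos_of_ne_zero (NeZero.ne _)
    have hvadd : ((g + w) i).val
        = ((g i).val + (w i).val) % ((z i * (h - 1) + 1) * s i) := by
      rw [Pi.add_apply, ZMod.val_add]
    rcases (by have := hz i; omega : z i = 0 ∨ z i = 1) with h0 | h1
    · have hN : (z i * (h - 1) + 1) * s i = s i := by rw [h0]; ring
      rw [hvadd]
      set A := (g i).val with hA
      set B := (w i).val with hB
      rw [hN]
      have hAlt : A < s i := by
        have hx : A < (z i * (h - 1) + 1) * s i := by rw [hA]; exact ZMod.val_lt _
        exact lt_of_lt_of_eq hx hN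
      have hBlt : B < s i := by
        have hx : B < (z i * (h - 1) + 1) * s i := by rw [hB]; exact ZMod.val_lt _
        exact lt_of_lt_of_eq hx hN
      rw [Nat.div_eq_of_lt (Nat.mod_lt _ hpos), Nat.div_eq_of_lt hAlt,
        Nat.div_eq_of_lt hBlt]
      simp [h0]
    · have hc : z i * (h - 1) + 1 = h := by rw [h1, one_mul]; omega
      have hN : (z i * (h - 1) + 1) * s i = h * s i := by rw [hc]
      rw [hvadd]
      set A := (g i).val with hA
      set B := (w i).val with hB
      rw [hN, if_pos h1]
      exact div_mod_cast h (s i) A B hpos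
  show φ (fun i => ((((g + w) i)).val : ZMod (s i)))
      + ((∑ i, ((g + w) i).val / s i : ℕ) : ZMod h) = _
  rw [hφarg, hsum]
  ring

private lemma expand_diff (m h : ℕ) (s z : Fin m → ℕ)
    [∀ i, NeZero ((z i * (h - 1) + 1) * s i)] [∀ i, NeZero (s i)]
    (hh : 2 ≤ h) (hz : ∀ i, z i ≤ 1)
    (φ : (∀ i, ZMod (s i)) → ZMod h)
    (g w : ∀ i, ZMod ((z i * (h - 1) + 1) * s i)) :
    expand m h s z φ g - expand m h s z φ (g + w)
      = -(psiexp m h s z φ (resHom m h s z w) (resHom m h s z g))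
        - φ (resHom m h s z w) - ((∑ i, (w i).val / s i : ℕ) : ZMod h) := by
  have E1 := expand_add m h s z hh hz φ g w
  have E2 : expand m h s z φ g
      = φ (resHom m h s z g) + ((∑ i, (g i).val / s i : ℕ) : ZMod h) := rfl
  rw [E1, E2, add_comm (resHom m h s z g) (resHom m h s z w),
    muexp_comm m h s z (resHom m h s z g) (resHom m h s z w)]
  unfold psiexp
  ring

private lemma resHom_surjective (m h : ℕ) (s z : Fin m → ℕ)
    [∀ i, NeZero ((z i * (h - 1) + 1) * s i)] [∀ i, NeZero (s i)] :
    Function.Surjective (resHom m h s z) := by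
  intro x
  refine ⟨fun i => (((x i).val : ℕ) : ZMod ((z i * (h - 1) + 1) * s i)), ?_⟩
  funext i
  show (((((((x i).val : ℕ)) : ZMod ((z i * (h - 1) + 1) * s i))).val : ℕ) : ZMod (s i)) = x i
  rw [ZMod.val_natCast, Nat.mod_eq_of_lt, ZMod.natCast_zmod_val]
  exact Nat.lt_of_lt_of_le (ZMod.val_lt _)
    (Nat.le_mul_of_pos_left _ (Nat.succ_pos _))

private lemma mem_L_iff (m h : ℕ) (s z : Fin m → ℕ)
    [∀ i, NeZero ((z i * (h - 1) + 1) * s i)] [∀ i, NeZero (s i)]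
    (g : ∀ i, ZMod ((z i * (h - 1) + 1) * s i)) :
    g ∈ LSet m h s z ↔ resHom m h s z g = 0 := by
  constructor
  · intro hg
    funext i
    show (((g i).val : ℕ) : ZMod (s i)) = 0
    exact (ZMod.natCast_eq_zero_iff _ _).2 (hg i).1
  · intro hg i
    have h1 : s i ∣ (g i).val := by
      have := congrFun hg i
      exact (ZMod.natCast_eq_zero_iff _ _).1 this
    refine ⟨h1, fun hz0 => ?_⟩
    have hN : (z i * (h - 1) + 1) * s i = s i := by rw [hz0]; ring
    have hlt : (g i).val < s i :=
      lt_of_lt_of_eq (ZMod.val_lt (g i)) hN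
    exact Nat.eq_zero_of_dvd_of_lt h1 hlt

end Helpers

/-- for `h` a prime dividing `Π_i s_i` and a normalized array
`φ : G → ℤ_h`, `φ` is a `GPhA(s)` of type `z ≠ 0` iff the cocycle `μ_z·∂φ` is
orthogonal, i.e. `M_{μ_z·∂φ} ∈ BH(Π_i s_i, h)`. -/
theorem GPhA_iff_orthogonal
    (m h : ℕ) (s z : Fin m → ℕ)
    [∀ i, NeZero ((z i * (h - 1) + 1) * s i)] [∀ i, NeZero (s i)]
    (hh : 2 ≤ h) (hs : ∀ i, 1 < s i) (hz : ∀ i, z i ≤ 1)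
    (hp : Nat.Prime h) (hdvd : h ∣ ∏ i, s i) (hz0 : ∃ i, z i = 1)
    (φ : (∀ i, ZMod (s i)) → ZMod h) (hφ0 : φ 0 = 0) :
    (∀ g, g ∉ LSet m h s z → AC h (expand m h s z φ) g = 0) ↔
      IsBH (∏ i, s i) h
        (Matrix.of fun a b : ∀ i, ZMod (s i) =>
          zeta h ^ (psiexp m h s z φ a b).val) := by
  classical
  haveI : NeZero h := ⟨by omega⟩
  have hh0 : h ≠ 0 := by omega
  set M : Matrix (∀ i, ZMod (s i)) (∀ i, ZMod (s i)) ℂ :=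
    Matrix.of (fun a b : ∀ i, ZMod (s i) => zeta h ^ (psiexp m h s z φ a b).val)
    with hMdef
  set S : (∀ i, ZMod (s i)) → ℂ :=
    fun w => ∑ b, ze h (psiexp m h s z φ w b) with hSdef
  have ncard : Fintype.card (∀ i, ZMod (s i)) = ∏ i, s i := by
    rw [Fintype.card_pi]
    exact Finset.prod_congr rfl fun i _ => ZMod.card (s i)
  have hMab : ∀ a b, M a b = ze h (psiexp m h s z φ a b) := fun a b => rfl
  -- entry formula for M * Mᴴ
  have hentry : ∀ a a', (M * M.conjTranspose) a a'
      = ze h (-(psiexp m h s z φ (a - a') a')) * S (a - a') := by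
    intro a a'
    rw [Matrix.mul_apply]
    have hstep : ∀ b, M a b * M.conjTranspose b a'
        = ze h (-(psiexp m h s z φ (a - a') a'))
          * ze h (psiexp m h s z φ (a - a') (a' + b)) := by
      intro b
      rw [Matrix.conjTranspose_apply, hMab, hMab]
      rw [show (star (ze h (psiexp m h s z φ a' b)) : ℂ)
          = (starRingEnd ℂ) (ze h (psiexp m h s z φ a' b)) from rfl]
      rw [conj_ze h hh0, ← ze_add h hh0, ← ze_add h hh0]
      congr 1
      have hc := psiexp_cocycle m h s z φ (a - a') a' b
      rw [sub_add_cancel] at hc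
      linear_combination hc
    rw [Finset.sum_congr rfl fun b _ => hstep b, ← Finset.mul_sum]
    congr 1
    exact Fintype.sum_equiv (Equiv.addLeft a')
      (fun b => ze h (psiexp m h s z φ (a - a') (a' + b)))
      (fun c => ze h (psiexp m h s z φ (a - a') c)) (fun b => rfl)
  -- BH ↔ all nontrivial row sums vanish
  have hBH : IsBH (∏ i, s i) h M ↔ ∀ w, w ≠ 0 → S w = 0 := by
    constructor
    · rintro ⟨-, -, hmat⟩ w hw
      have hW := congrFun (congrFun hmat w) 0
      rw [hentry w 0, sub_zero, psiexp_zero_right m h s z φ hφ0, neg_zero,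
        ze_zero h hh0, one_mul, Matrix.smul_apply, Matrix.one_apply_ne hw,
        smul_zero] at hW
      exact hW
    · intro hS0
      refine ⟨ncard, fun a b => ⟨(psiexp m h s z φ a b).val, rfl⟩, ?_⟩
      ext a a'
      rw [hentry a a']
      by_cases hEq : a = a'
      · subst hEq
        rw [sub_self, psiexp_zero_left m h s z φ hφ0, neg_zero, ze_zero h hh0,
          one_mul]
        have hS0val : S 0 = ((∏ i, s i : ℕ) : ℂ) := by
          calc S 0 = ∑ _b : (∀ i, ZMod (s i)), (1 : ℂ) := by
                refine Finset.sum_congr rfl fun b _ => ?_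
                rw [psiexp_zero_left m h s z φ hφ0, ze_zero h hh0]
            _ = (Fintype.card (∀ i, ZMod (s i)) : ℂ) := by
                rw [Finset.sum_const, Finset.card_univ, nsmul_eq_mul, mul_one]
            _ = _ := by rw [ncard]
        rw [hS0val, Matrix.smul_apply, Matrix.one_apply_eq, smul_eq_mul, mul_one]
      · rw [hS0 _ (sub_ne_zero_of_ne hEq), mul_zero, Matrix.smul_apply,
          Matrix.one_apply_ne hEq, smul_zero]
  -- AC formula
  have hr_surj : Function.Surjective (resHom m h s z) := resHom_surjective m h s z
  haveI : Nonempty (resHom m h s z).ker := ⟨0⟩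
  have hconjsum : ∀ w, (∑ b, ze h (-(psiexp m h s z φ w b)))
      = (starRingEnd ℂ) (S w) := by
    intro w
    rw [show S w = ∑ b, ze h (psiexp m h s z φ w b) from rfl, map_sum]
    exact Finset.sum_congr rfl fun b _ => (conj_ze h hh0 _).symm
  have hACformula : ∀ w' : (∀ i, ZMod ((z i * (h - 1) + 1) * s i)),
      AC h (expand m h s z φ) w'
        = ze h (-(φ (resHom m h s z w'))
              - ((∑ i, (w' i).val / s i : ℕ) : ZMod h))
          * ((Fintype.card (resHom m h s z).ker : ℂ)
            * (starRingEnd ℂ) (S (resHom m h s z w'))) := by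
    intro w'
    rw [AC]
    have hterm : ∀ g, zeta h ^ ((expand m h s z φ g
          - expand m h s z φ (g + w')).val)
        = ze h (-(φ (resHom m h s z w'))
            - ((∑ i, (w' i).val / s i : ℕ) : ZMod h))
          * ze h (-(psiexp m h s z φ (resHom m h s z w') (resHom m h s z g))) := by
      intro g
      have hd := expand_diff m h s z hh hz φ g w'
      show ze h (expand m h s z φ g - expand m h s z φ (g + w')) = _
      rw [hd, ← ze_add h hh0]
      congr 1
      ring
    rw [Finset.sum_congr rfl fun g _ => hterm g, ← Finset.mul_sum]
    rw [sum_comp_surj (resHom m h s z) hr_surj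
      (fun b => ze h (-(psiexp m h s z φ (resHom m h s z w') b)))]
    rw [hconjsum]
  have hACzero : ∀ w', (AC h (expand m h s z φ) w' = 0
      ↔ S (resHom m h s z w') = 0) := by
    intro w'
    rw [hACformula w']
    constructor
    · intro h0
      rcases mul_eq_zero.1 h0 with hc | hc
      · exact absurd hc (ze_ne_zero h _)
      rcases mul_eq_zero.1 hc with hc2 | hc2
      · exact absurd hc2 (Nat.cast_ne_zero.2 Fintype.card_ne_zero)
      · exact star_eq_zero.1 hc2
    · intro h0
      rw [h0, map_zero, mul_zero, mul_zero]
  have hL : ∀ w', w' ∉ LSet m h s z ↔ resHom m h s z w' ≠ 0 := by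
    intro w'
    exact not_congr (mem_L_iff m h s z w')
  constructor
  · intro hGP
    refine hBH.2 fun w hw => ?_
    obtain ⟨w', hw'⟩ := hr_surj w
    have hwL : w' ∉ LSet m h s z := (hL w').2 (by rw [hw']; exact hw)
    have h0 := (hACzero w').1 (hGP w' hwL)
    rwa [hw'] at h0
  · intro hBHh w' hwL
    exact (hACzero w').2 (hBH.1 hBHh _ ((hL w').1 hwL))
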